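/- Let Σ ∈ ℝ^{d×d} be symmetric positive definite, μ = (μ_1,…,μ_C) ∈ (ℝ^d)^C, and define ℓ(x; μ) = log( (1/C) Σ_{i=1}^C exp(−½‖x−μ_i‖²_{Σ⁻¹}) ) for x ∈ ℝ^d, and the responsibilities p_i(x) = exp(−½‖x−μ_i‖²_{Σ⁻¹}) / Σ_{c=1}^C exp(−½‖x−μ_c‖²_{Σ⁻¹}). Then ℓ(x; ·) is twice continuously differentiable in μ, and for every direction Δ = (Δ_1,…,Δ_C) ∈ (ℝ^d)^C its Hessian quadratic form equals Δᵀ (∇²_μ ℓ(x; μ)) Δ = −Σ_{i=1}^C p_i(x)‖Δ_i‖²_{Σ⁻¹} + [ Σ_{i=1}^C p_i(x) u_i² − ( Σ_{i=1}^C p_i(x) u_i )² ], where u_i = ⟨Σ⁻¹(x−μ_i), Δ_i⟩. -/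

import Mathlib

/-!
Statement 16: pointwise Hessian quadratic form of the log-sum-exp likelihood
ℓ(x; μ) = log((1/C) Σ_i exp(−½‖x−μ_i‖²_{Σ⁻¹})):
Δᵀ(∇²_μ ℓ)Δ = −Σ_i p_i(x)‖Δ_i‖²_{Σ⁻¹} + Var_{p(x)}(u), u_i = ⟨Σ⁻¹(x−μ_i), Δ_i⟩.
The quadratic form is rendered as the second derivative at 0 of s ↦ ℓ(x; μ + sΔ).
-/

open Finset

noncomputable section

abbrev E (d : ℕ) := EuclideanSpace ℝ (Fin d)

/-- bilinear form vᵀAw. -/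
def biForm {d : ℕ} (A : Matrix (Fin d) (Fin d) ℝ) (v w : E d) : ℝ :=
  ∑ a : Fin d, ∑ b : Fin d, v a * A a b * w b

/-- quadratic form vᵀAv. -/
def quadForm {d : ℕ} (A : Matrix (Fin d) (Fin d) ℝ) (v : E d) : ℝ :=
  biForm A v v

/-- log-mixture-likelihood ℓ(x; ν). -/
def ell {d C : ℕ} (S : Matrix (Fin d) (Fin d) ℝ) (x : E d) (ν : Fin C → E d) : ℝ :=
  Real.log ((1 / C : ℝ) * ∑ i : Fin C, Real.exp (-(1 / 2) * quadForm S⁻¹ (x - ν i)))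

/-- softmax responsibility p_i(x). -/
def respS {d C : ℕ} (S : Matrix (Fin d) (Fin d) ℝ) (μ : Fin C → E d)
    (x : E d) (i : Fin C) : ℝ :=
  Real.exp (-(1 / 2) * quadForm S⁻¹ (x - μ i)) /
    ∑ c : Fin C, Real.exp (-(1 / 2) * quadForm S⁻¹ (x - μ c))

/-- derivative of a quadratic polynomial. -/
lemma poly_hasDeriv (c0 c1 c2 s : ℝ) :
    HasDerivAt (fun t : ℝ => c0 + c1 * t + c2 * t ^ 2) (c1 + 2 * c2 * s) s := by
  have h1 : HasDerivAt (fun t : ℝ => c0 + c1 * t) c1 s := by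
    simpa using ((hasDerivAt_id s).const_mul c1).const_add c0
  have h2 : HasDerivAt (fun t : ℝ => c2 * t ^ 2) (2 * c2 * s) s := by
    have := (hasDerivAt_pow 2 s).const_mul c2
    refine this.congr_deriv ?_
    push_cast; ring
  exact h1.add h2

/-- expansion of the quadratic form along a line. -/
lemma quad_sub_smul {d : ℕ} (A : Matrix (Fin d) (Fin d) ℝ)
    (hsym : ∀ a b, A a b = A b a) (v w : E d) (s : ℝ) :
    quadForm A (v - s • w) =
      quadForm A v - 2 * s * biForm A v w + s ^ 2 * quadForm A w := by
  simp only [quadForm, biForm, PiLp.sub_apply, PiLp.smul_apply, smul_eq_mul]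
  have key : ∀ a b : Fin d, (v a - s * w a) * A a b * (v b - s * w b) =
      v a * A a b * v b - s * (v a * A a b * w b) - s * (w a * A a b * v b)
        + s ^ 2 * (w a * A a b * w b) := by intros; ring
  have swap : (∑ a : Fin d, ∑ b : Fin d, w a * A a b * v b)
      = ∑ a : Fin d, ∑ b : Fin d, v a * A a b * w b := by
    rw [Finset.sum_comm]
    refine Finset.sum_congr rfl fun a _ => Finset.sum_congr rfl fun b _ => ?_
    rw [hsym b a]; ring
  calc (∑ a : Fin d, ∑ b : Fin d, (v a - s * w a) * A a b * (v b - s * w b))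
      = ∑ a : Fin d, ∑ b : Fin d, (v a * A a b * v b - s * (v a * A a b * w b)
          - s * (w a * A a b * v b) + s ^ 2 * (w a * A a b * w b)) :=
        Finset.sum_congr rfl fun a _ => Finset.sum_congr rfl fun b _ => key a b
    _ = _ := by
        simp only [Finset.sum_add_distrib, Finset.sum_sub_distrib, ← Finset.mul_sum]
        rw [swap]; ring

/-- the final algebraic identity. -/
lemma final_algebra {C : ℕ} [NeZero C] (e bv rv : Fin C → ℝ) (he : ∀ i, 0 < e i) :
    ((∑ i, e i * ((bv i)^2 - rv i)) * (∑ i, e i) - (∑ i, e i * bv i) * (∑ i, e i * bv i))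
      / (∑ i, e i)^2
    = -(∑ i, (e i / ∑ c, e c) * rv i) +
        ((∑ i, (e i / ∑ c, e c) * (bv i)^2) - (∑ i, (e i / ∑ c, e c) * bv i)^2) := by
  have hT : 0 < ∑ c, e c := Finset.sum_pos (fun i _ => he i) Finset.univ_nonempty
  simp only [div_mul_eq_mul_div, ← Finset.sum_div, mul_sub, Finset.sum_sub_distrib]
  field_simp
  ring

/-- ℓ(x;·) is C² and its Hessian quadratic form at μ equals
−Σ_i p_i‖Δ_i‖²_{Σ⁻¹} + (Σ_i p_i u_i² − (Σ_i p_i u_i)²). -/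
theorem pointwise_hessian_quadratic_form
    (d C : ℕ) (hd : 1 ≤ d) (hC : 2 ≤ C)
    (S : Matrix (Fin d) (Fin d) ℝ) (hS : S.PosDef)
    (μ : Fin C → E d) (x : E d) :
    ContDiff ℝ 2 (fun ν : Fin C → E d => ell S x ν) ∧
    ∀ Δ : Fin C → E d,
      deriv (deriv fun s : ℝ => ell S x (fun c => μ c + s • Δ c)) 0 =
        -(∑ i : Fin C, respS S μ x i * quadForm S⁻¹ (Δ i)) +
          ((∑ i : Fin C, respS S μ x i * (biForm S⁻¹ (x - μ i) (Δ i)) ^ 2) -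
            (∑ i : Fin C, respS S μ x i * biForm S⁻¹ (x - μ i) (Δ i)) ^ 2) := by
  have hCpos : 0 < C := by omega
  haveI : NeZero C := ⟨by omega⟩
  haveI : Nonempty (Fin C) := ⟨⟨0, hCpos⟩⟩
  have hCR : (0 : ℝ) < (1 / C : ℝ) := by
    have : (0 : ℝ) < (C : ℝ) := by exact_mod_cast hCpos
    positivity
  -- symmetry of S⁻¹
  have hsym : ∀ a b, S⁻¹ a b = S⁻¹ b a := by
    intro a b
    have h : (S⁻¹).IsHermitian := (hS.inv).1
    have := h.apply b a
    simpa using this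
  constructor
  · -- ContDiff part
    have hpos : ∀ ν : Fin C → E d,
        (0:ℝ) < (1 / C : ℝ) * ∑ i : Fin C, Real.exp (-(1 / 2) * quadForm S⁻¹ (x - ν i)) :=
      fun ν => mul_pos hCR
        (Finset.sum_pos (fun i _ => Real.exp_pos _) Finset.univ_nonempty)
    have hin : ContDiff ℝ 2 (fun ν : Fin C → E d =>
        (1 / C : ℝ) * ∑ i : Fin C, Real.exp (-(1 / 2) * quadForm S⁻¹ (x - ν i))) := by
      apply ContDiff.mul contDiff_const
      apply ContDiff.sum
      intro i _
      apply ContDiff.exp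
      apply ContDiff.mul contDiff_const
      unfold quadForm biForm
      apply ContDiff.sum; intro a _
      apply ContDiff.sum; intro b _
      have hcoord : ∀ c : Fin d, ContDiff ℝ 2 (fun ν : Fin C → E d => (x - ν i) c) := by
        intro c
        have : (fun ν : Fin C → E d => (x - ν i) c) =
            (fun ν : Fin C → E d => x c - ((EuclideanSpace.proj c : E d →L[ℝ] ℝ).comp
              (ContinuousLinearMap.proj i : (Fin C → E d) →L[ℝ] E d)) ν) := by
          funext ν; simp [PiLp.sub_apply]
        rw [this]
        exact contDiff_const.sub (ContinuousLinearMap.contDiff _)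
      exact ((hcoord a).mul contDiff_const).mul (hcoord b)
    exact hin.log (fun ν => (hpos ν).ne')
  · intro Δ
    -- abbreviations
    set q : Fin C → ℝ := fun i => quadForm S⁻¹ (x - μ i) with hq
    set bb : Fin C → ℝ := fun i => biForm S⁻¹ (x - μ i) (Δ i) with hbb
    set rr : Fin C → ℝ := fun i => quadForm S⁻¹ (Δ i) with hrr
    set p : Fin C → ℝ → ℝ :=
      fun i s => -(1/2) * q i + bb i * s + (-(rr i)/2) * s ^ 2 with hp
    -- rewrite the 1-d function
    have hfun : (fun s : ℝ => ell S x (fun c => μ c + s • Δ c)) =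
        fun s : ℝ => Real.log (1 / C : ℝ) + Real.log (∑ i : Fin C, Real.exp (p i s)) := by
      funext s
      have hsum : ∀ i : Fin C,
          -(1 / 2 : ℝ) * quadForm S⁻¹ (x - (μ i + s • Δ i)) = p i s := by
        intro i
        have hx : x - (μ i + s • Δ i) = (x - μ i) - s • Δ i := by abel
        rw [hx, quad_sub_smul S⁻¹ hsym]
        simp only [hp, hq, hbb, hrr]
        ring
      unfold ell
      rw [Real.log_mul hCR.ne'
        (Finset.sum_pos (fun i _ => Real.exp_pos _) Finset.univ_nonempty).ne']
      congr 1
      refine congrArg Real.log (Finset.sum_congr rfl fun i _ => ?_)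
      rw [← hsum i]
    have hT : ∀ s : ℝ, (0:ℝ) < ∑ i : Fin C, Real.exp (p i s) :=
      fun s => Finset.sum_pos (fun i _ => Real.exp_pos _) Finset.univ_nonempty
    -- first derivative of the sum
    have H1 : ∀ s : ℝ, HasDerivAt (fun t : ℝ => ∑ i : Fin C, Real.exp (p i t))
        (∑ i : Fin C, Real.exp (p i s) * (bb i - rr i * s)) s := by
      intro s
      have := HasDerivAt.fun_sum (u := Finset.univ)
        (fun i (_ : i ∈ Finset.univ) =>
          (poly_hasDeriv (-(1/2) * q i) (bb i) (-(rr i)/2) s).exp)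
      refine this.congr_deriv ?_
      exact Finset.sum_congr rfl fun i _ => by ring
    -- the first derivative of the 1-d function
    have hderiv1 : deriv (fun s : ℝ => ell S x (fun c => μ c + s • Δ c)) =
        fun s : ℝ => (∑ i : Fin C, Real.exp (p i s) * (bb i - rr i * s)) /
          (∑ i : Fin C, Real.exp (p i s)) := by
      funext s
      rw [hfun]
      exact (((H1 s).log (hT s).ne').const_add (Real.log (1 / C : ℝ))).deriv
    -- second derivative
    have H2 : HasDerivAt (fun s : ℝ => ∑ i : Fin C, Real.exp (p i s) * (bb i - rr i * s))
        (∑ i : Fin C, Real.exp (p i 0) * ((bb i) ^ 2 - rr i)) 0 := by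
      have := HasDerivAt.fun_sum (u := Finset.univ)
        (fun i (_ : i ∈ Finset.univ) =>
          HasDerivAt.mul
            ((poly_hasDeriv (-(1/2) * q i) (bb i) (-(rr i)/2) 0).exp)
            (((hasDerivAt_id (0:ℝ)).const_mul (rr i)).const_sub (bb i)))
      refine this.congr_deriv ?_
      refine Finset.sum_congr rfl fun i _ => ?_
      simp only [id_eq]
      ring
    have Hdiv : HasDerivAt
        (fun s : ℝ => (∑ i : Fin C, Real.exp (p i s) * (bb i - rr i * s)) /
          (∑ i : Fin C, Real.exp (p i s)))
        (((∑ i : Fin C, Real.exp (p i 0) * ((bb i) ^ 2 - rr i)) *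
            (∑ i : Fin C, Real.exp (p i 0)) -
          (∑ i : Fin C, Real.exp (p i 0) * (bb i - rr i * 0)) *
            (∑ i : Fin C, Real.exp (p i 0) * (bb i - rr i * 0))) /
          (∑ i : Fin C, Real.exp (p i 0)) ^ 2) 0 :=
      H2.div (H1 0) (hT 0).ne'
    rw [hderiv1, Hdiv.deriv]
    -- now finish with algebra
    have hp0 : ∀ i : Fin C, p i 0 = -(1/2) * q i := by
      intro i; simp [hp]
    have hresp : ∀ i : Fin C, respS S μ x i =
        Real.exp (-(1/2) * q i) / ∑ c : Fin C, Real.exp (-(1/2) * q c) := by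
      intro i
      simp only [respS, hq]
    simp only [hp0, mul_zero, sub_zero, hresp]
    exact final_algebra (fun i => Real.exp (-(1/2) * q i)) bb rr
      (fun i => Real.exp_pos _)

end
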